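/- arXiv:1804.06444 — 2 statements merged into one kernel-verified Lean document; each statement's English description precedes it below -/
import Mathlib

section
/- At every point x = (x₁,…,x_{2n},t) ∈ ℝ^{2n+1} with Σ(x) ≠ 0, the squared norm of the horizontal gradient of ψ satisfies ‖∇₀ψ‖² = c² Σ^{2k−1} h^{(1−2k)/(2k)}. -/
open MeasureTheory Real Filter

noncomputable section

/-- Points of `ℝ^{2n+1}`: the `2n` horizontal coordinates indexed by `Fin n ⊕ Fin n`
(`Sum.inl i` encodes the coordinate `x_i` for `1 ≤ i ≤ n`, and `Sum.inr i` encodes the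
coordinate `x_{i+n}`), together with the vertical coordinate `t`. -/
abbrev Pt (n : ℕ) := ((Fin n ⊕ Fin n) → ℝ) × ℝ

/-- `Σ(x) = ∑_{l=1}^{2n} (x_l - a_l)²`. -/
def Sg (n : ℕ) (a : Fin n ⊕ Fin n → ℝ) (x : Pt n) : ℝ :=
  ∑ l : Fin n ⊕ Fin n, (x.1 l - a l) ^ 2

/-- Partial derivative `∂u/∂x_l` in the `l`-th horizontal coordinate direction. -/
def pdx (n : ℕ) (l : Fin n ⊕ Fin n) (u : Pt n → ℝ) (x : Pt n) : ℝ :=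
  fderiv ℝ u x (Pi.single l 1, 0)

/-- Partial derivative `∂u/∂t` in the vertical direction. -/
def pdt (n : ℕ) (u : Pt n → ℝ) (x : Pt n) : ℝ :=
  fderiv ℝ u x (0, 1)

/-- The Hörmander vector fields:
`X_i u = ∂u/∂x_i + 2kc (x_{i+n} - a_{i+n}) Σ^{k-1} ∂u/∂t` for `1 ≤ i ≤ n`, and
`X_j u = ∂u/∂x_j - 2kc (x_{j-n} - a_{j-n}) Σ^{k-1} ∂u/∂t` for `n+1 ≤ j ≤ 2n`. -/
def X (n : ℕ) (k c : ℝ) (a : Fin n ⊕ Fin n → ℝ) (l : Fin n ⊕ Fin n)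
    (u : Pt n → ℝ) (x : Pt n) : ℝ :=
  match l with
  | Sum.inl i => pdx n (Sum.inl i) u x
      + 2 * k * c * (x.1 (Sum.inr i) - a (Sum.inr i)) * Sg n a x ^ (k - 1) * pdt n u x
  | Sum.inr j => pdx n (Sum.inr j) u x
      - 2 * k * c * (x.1 (Sum.inl j) - a (Sum.inl j)) * Sg n a x ^ (k - 1) * pdt n u x

/-- Norm of the horizontal gradient `∇₀u = (X₁u, …, X_{2n}u)`. -/
def hnorm (n : ℕ) (k c : ℝ) (a : Fin n ⊕ Fin n → ℝ) (u : Pt n → ℝ) (x : Pt n) : ℝ :=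
  Real.sqrt (∑ l : Fin n ⊕ Fin n, (X n k c a l u x) ^ 2)

/-- The `p`-Laplacian `Δ_p u = ∑_{l=1}^{2n} X_l (‖∇₀u‖^{p-2} X_l u)`. -/
def pLap (n : ℕ) (k c : ℝ) (a : Fin n ⊕ Fin n → ℝ) (p : ℝ) (u : Pt n → ℝ) (x : Pt n) : ℝ :=
  ∑ l : Fin n ⊕ Fin n,
    X n k c a l (fun y => hnorm n k c a u y ^ (p - 2) * X n k c a l u y) x

/-- `h(x) = c² Σ(x)^{2k} + (t-s)²`. -/
def hfun (n : ℕ) (k c : ℝ) (a : Fin n ⊕ Fin n → ℝ) (s : ℝ) (x : Pt n) : ℝ :=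
  c ^ 2 * Sg n a x ^ (2 * k) + (x.2 - s) ^ 2

/-- `ψ = h^{1/(4k)}`. -/
def psi (n : ℕ) (k c : ℝ) (a : Fin n ⊕ Fin n → ℝ) (s : ℝ) (x : Pt n) : ℝ :=
  hfun n k c a s x ^ (1 / (4 * k))

def coordCLM (n : ℕ) (l : Fin n ⊕ Fin n) : Pt n →L[ℝ] ℝ :=
  (ContinuousLinearMap.proj l).comp (ContinuousLinearMap.fst ℝ ((Fin n ⊕ Fin n) → ℝ) ℝ)

lemma hasFDerivAt_Sg (n : ℕ) (a : Fin n ⊕ Fin n → ℝ) (x : Pt n) :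
    HasFDerivAt (Sg n a) (∑ l, (2 * (x.1 l - a l)) • coordCLM n l) x := by
  unfold Sg
  apply HasFDerivAt.fun_sum
  intro l _
  have h1 : HasFDerivAt (fun y : Pt n => y.1 l - a l) (coordCLM n l) x := by
    exact (coordCLM n l).hasFDerivAt.sub_const (a l)
  simpa [pow_two, two_mul, add_smul] using h1.fun_mul h1

lemma hasFDerivAt_hfun (n : ℕ) (k c : ℝ) (a : Fin n ⊕ Fin n → ℝ) (s : ℝ) (x : Pt n)
    (hx : Sg n a x ≠ 0) :
    HasFDerivAt (hfun n k c a s)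
      ((c ^ 2 * (2 * k * Sg n a x ^ (2 * k - 1))) • (∑ l, (2 * (x.1 l - a l)) • coordCLM n l)
        + (2 * (x.2 - s)) • ContinuousLinearMap.snd ℝ ((Fin n ⊕ Fin n) → ℝ) ℝ) x := by
  unfold hfun
  have h1 := ((hasFDerivAt_Sg n a x).rpow_const (p := 2 * k) (Or.inl hx)).const_mul (c ^ 2)
  have h2 : HasFDerivAt (fun y : Pt n => y.2 - s)
      (ContinuousLinearMap.snd ℝ ((Fin n ⊕ Fin n) → ℝ) ℝ) x := by
    simpa using (ContinuousLinearMap.snd ℝ ((Fin n ⊕ Fin n) → ℝ) ℝ).hasFDerivAt.sub_const s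
  have h3 := h2.mul h2
  have := h1.add h3
  refine (this.congr_fderiv ?_).congr_of_eventuallyEq (Filter.Eventually.of_forall fun y => ?_)
  · simp [smul_smul, two_mul, add_smul]
  · simp [pow_two]

lemma hfun_pos (n : ℕ) (k c : ℝ) (a : Fin n ⊕ Fin n → ℝ) (s : ℝ) (x : Pt n)
    (hc : c ≠ 0) (hx : Sg n a x ≠ 0) : 0 < hfun n k c a s x := by
  have hS : 0 < Sg n a x := by
    have : 0 ≤ Sg n a x := Finset.sum_nonneg fun l _ => sq_nonneg _
    exact this.lt_of_ne' hx
  have : 0 < c ^ 2 * Sg n a x ^ (2 * k) :=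
    mul_pos (by positivity) (Real.rpow_pos_of_pos hS _)
  unfold hfun
  nlinarith [sq_nonneg (x.2 - s)]

lemma hasFDerivAt_psi (n : ℕ) (k c : ℝ) (a : Fin n ⊕ Fin n → ℝ) (s : ℝ) (x : Pt n)
    (hc : c ≠ 0) (hx : Sg n a x ≠ 0) :
    HasFDerivAt (psi n k c a s)
      ((1 / (4 * k) * hfun n k c a s x ^ (1 / (4 * k) - 1)) •
        ((c ^ 2 * (2 * k * Sg n a x ^ (2 * k - 1))) • (∑ l, (2 * (x.1 l - a l)) • coordCLM n l)
          + (2 * (x.2 - s)) • ContinuousLinearMap.snd ℝ ((Fin n ⊕ Fin n) → ℝ) ℝ)) x := by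
  exact (hasFDerivAt_hfun n k c a s x hx).rpow_const
    (Or.inl (hfun_pos n k c a s x hc hx).ne')

lemma pdx_psi (n : ℕ) (k c : ℝ) (a : Fin n ⊕ Fin n → ℝ) (s : ℝ) (x : Pt n)
    (hc : c ≠ 0) (hx : Sg n a x ≠ 0) (m : Fin n ⊕ Fin n) :
    pdx n m (psi n k c a s) x
      = 1 / (4 * k) * hfun n k c a s x ^ (1 / (4 * k) - 1) *
        (c ^ 2 * (2 * k * Sg n a x ^ (2 * k - 1)) * (2 * (x.1 m - a m))) := by
  rw [pdx, (hasFDerivAt_psi n k c a s x hc hx).fderiv]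
  have hsum : (∑ l, (2 * (x.1 l - a l)) • coordCLM n l) ((Pi.single m 1, 0) : Pt n)
      = 2 * (x.1 m - a m) := by
    rw [ContinuousLinearMap.sum_apply]
    rw [Finset.sum_eq_single m]
    · simp [coordCLM]
    · intro b _ hb; simp [coordCLM, Pi.single_apply, hb]
    · simp
  simp only [ContinuousLinearMap.smul_apply, ContinuousLinearMap.add_apply, hsum,
    ContinuousLinearMap.coe_snd', smul_eq_mul]
  ring

lemma pdt_psi (n : ℕ) (k c : ℝ) (a : Fin n ⊕ Fin n → ℝ) (s : ℝ) (x : Pt n)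
    (hc : c ≠ 0) (hx : Sg n a x ≠ 0) :
    pdt n (psi n k c a s) x
      = 1 / (4 * k) * hfun n k c a s x ^ (1 / (4 * k) - 1) * (2 * (x.2 - s)) := by
  rw [pdt, (hasFDerivAt_psi n k c a s x hc hx).fderiv]
  simp [coordCLM]

lemma X_inl_psi (n : ℕ) (k c : ℝ) (a : Fin n ⊕ Fin n → ℝ) (s : ℝ) (x : Pt n)
    (hc : c ≠ 0) (hk : 0 < k) (hx : Sg n a x ≠ 0) (i : Fin n) :
    X n k c a (Sum.inl i) (psi n k c a s) x
      = hfun n k c a s x ^ (1 / (4 * k) - 1) *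
        (c ^ 2 * (x.1 (Sum.inl i) - a (Sum.inl i)) * Sg n a x ^ (2 * k - 1)
          + c * (x.1 (Sum.inr i) - a (Sum.inr i)) * Sg n a x ^ (k - 1) * (x.2 - s)) := by
  simp only [X, pdx_psi n k c a s x hc hx, pdt_psi n k c a s x hc hx]
  field_simp
  ring

lemma X_inr_psi (n : ℕ) (k c : ℝ) (a : Fin n ⊕ Fin n → ℝ) (s : ℝ) (x : Pt n)
    (hc : c ≠ 0) (hk : 0 < k) (hx : Sg n a x ≠ 0) (j : Fin n) :
    X n k c a (Sum.inr j) (psi n k c a s) x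
      = hfun n k c a s x ^ (1 / (4 * k) - 1) *
        (c ^ 2 * (x.1 (Sum.inr j) - a (Sum.inr j)) * Sg n a x ^ (2 * k - 1)
          - c * (x.1 (Sum.inl j) - a (Sum.inl j)) * Sg n a x ^ (k - 1) * (x.2 - s)) := by
  simp only [X, pdx_psi n k c a s x hc hx, pdt_psi n k c a s x hc hx]
  field_simp
  ring

theorem stmt12 (n : ℕ) (hn : 1 ≤ n) (a : Fin n ⊕ Fin n → ℝ) (s : ℝ)
    (c k : ℝ) (hc : c ≠ 0) (hk : 0 < k)
    (x : Pt n) (hx : Sg n a x ≠ 0) :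
    ∑ l : Fin n ⊕ Fin n, (X n k c a l (psi n k c a s) x) ^ 2
      = c ^ 2 * Sg n a x ^ (2 * k - 1) * hfun n k c a s x ^ ((1 - 2 * k) / (2 * k)) := by
  have hS : 0 < Sg n a x :=
    (Finset.sum_nonneg fun l _ => sq_nonneg _).lt_of_ne' hx
  have hh : 0 < hfun n k c a s x := hfun_pos n k c a s x hc hx
  set S := Sg n a x with hSdef
  set h0 := hfun n k c a s x with hh0def
  set e := h0 ^ (1 / (4 * k) - 1) with hedef
  set E := e ^ 2 * (c ^ 4 * (S ^ (2 * k - 1)) ^ 2 + c ^ 2 * (S ^ (k - 1)) ^ 2 * (x.2 - s) ^ 2)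
    with hEdef
  have step1 : ∑ l : Fin n ⊕ Fin n, (X n k c a l (psi n k c a s) x) ^ 2 = S * E := by
    rw [Fintype.sum_sum_type, ← Finset.sum_add_distrib]
    have : ∀ i : Fin n,
        X n k c a (Sum.inl i) (psi n k c a s) x ^ 2
          + X n k c a (Sum.inr i) (psi n k c a s) x ^ 2
        = ((x.1 (Sum.inl i) - a (Sum.inl i)) ^ 2 + (x.1 (Sum.inr i) - a (Sum.inr i)) ^ 2) * E := by
      intro i
      rw [X_inl_psi n k c a s x hc hk hx i, X_inr_psi n k c a s x hc hk hx i, hEdef]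
      ring
    rw [Finset.sum_congr rfl fun i _ => this i, ← Finset.sum_mul]
    congr 1
    rw [hSdef]
    simp only [Sg]
    rw [Fintype.sum_sum_type, ← Finset.sum_add_distrib]
  rw [step1]
  have h1 : (S ^ (2 * k - 1) : ℝ) ^ 2 = S ^ (2 * k - 2) * S ^ (2 * k) := by
    rw [sq, ← Real.rpow_add hS, ← Real.rpow_add hS]; congr 1; ring
  have h2 : (S ^ (k - 1) : ℝ) ^ 2 = S ^ (2 * k - 2) := by
    rw [sq, ← Real.rpow_add hS]; congr 1; ring
  have h3 : e ^ 2 = h0 ^ (1 / (2 * k) - 2) := by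
    rw [hedef, sq, ← Real.rpow_add hh]; congr 1; field_simp; ring
  have h4 : S * S ^ (2 * k - 2) = S ^ (2 * k - 1) := by
    nth_rewrite 1 [← Real.rpow_one S]
    rw [← Real.rpow_add hS]; congr 1; ring
  have h5 : h0 ^ (1 / (2 * k) - 2) * h0 = h0 ^ ((1 - 2 * k) / (2 * k)) := by
    nth_rewrite 2 [← Real.rpow_one h0]
    rw [← Real.rpow_add hh]; congr 1; field_simp; ring
  have hh0 : h0 = c ^ 2 * S ^ (2 * k) + (x.2 - s) ^ 2 := by rw [hh0def]; rfl
  rw [hEdef, h1, h2, h3]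
  calc S * (h0 ^ (1 / (2 * k) - 2) * (c ^ 4 * (S ^ (2 * k - 2) * S ^ (2 * k))
        + c ^ 2 * S ^ (2 * k - 2) * (x.2 - s) ^ 2))
      = (S * S ^ (2 * k - 2)) * ((h0 ^ (1 / (2 * k) - 2)
          * (c ^ 2 * S ^ (2 * k) + (x.2 - s) ^ 2)) * c ^ 2) := by ring
    _ = S ^ (2 * k - 1) * ((h0 ^ (1 / (2 * k) - 2) * h0) * c ^ 2) := by rw [h4, ← hh0]
    _ = c ^ 2 * S ^ (2 * k - 1) * h0 ^ ((1 - 2 * k) / (2 * k)) := by rw [h5]; ring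
end
end

section
/- Let 1 < p < ∞ with p ≠ Q and let 0 < r < R. The function u(x) = (ψ(x)^α − R^α)/(r^α − R^α) satisfies Δ_p u = 0 at every point of the annulus {x : r < ψ(x) < R} where Σ ≠ 0, together with the boundary conditions u(x) = 1 whenever ψ(x) = r and u(x) = 0 whenever ψ(x) = R. -/
open MeasureTheory Real Filter

noncomputable section

namespace SAux
variable {n : ℕ}

def Lm (n : ℕ) (l : Fin n ⊕ Fin n) : Pt n →L[ℝ] ℝ :=
  (ContinuousLinearMap.proj l).comp (ContinuousLinearMap.fst ℝ ((Fin n ⊕ Fin n) → ℝ) ℝ)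
def Tm (n : ℕ) : Pt n →L[ℝ] ℝ := ContinuousLinearMap.snd ℝ ((Fin n ⊕ Fin n) → ℝ) ℝ
@[simp] lemma Lm_apply (l : Fin n ⊕ Fin n) (v : Pt n) : Lm n l v = v.1 l := rfl
@[simp] lemma Tm_apply (v : Pt n) : Tm n v = v.2 := rfl
lemma hasFDerivAt_coord (l : Fin n ⊕ Fin n) (x : Pt n) (a : Fin n ⊕ Fin n → ℝ) :
    HasFDerivAt (fun y : Pt n => y.1 l - a l) (Lm n l) x :=
  (Lm n l).hasFDerivAt.sub_const (a l)
lemma hasFDerivAt_t (x : Pt n) (s : ℝ) :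
    HasFDerivAt (fun y : Pt n => y.2 - s) (Tm n) x :=
  (Tm n).hasFDerivAt.sub_const s
lemma hasFDerivAt_sq {f : Pt n → ℝ} {f' : Pt n →L[ℝ] ℝ} {x : Pt n}
    (h : HasFDerivAt f f' x) : HasFDerivAt (fun y => f y ^ 2) ((2 * f x) • f') x := by
  have h2 := h.fun_mul h
  have : (fun y => f y * f y) = fun y => f y ^ 2 := by ext y; ring
  rw [this] at h2
  rw [two_mul, add_smul]
  exact h2
def DS (a : Fin n ⊕ Fin n → ℝ) (x : Pt n) : Pt n →L[ℝ] ℝ :=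
  ∑ l : Fin n ⊕ Fin n, (2 * (x.1 l - a l)) • Lm n l
lemma hasFDerivAt_Sg (a : Fin n ⊕ Fin n → ℝ) (x : Pt n) :
    HasFDerivAt (Sg n a) (DS a x) x :=
  HasFDerivAt.fun_sum fun l _ => hasFDerivAt_sq (hasFDerivAt_coord l x a)
@[simp] lemma DS_single (a : Fin n ⊕ Fin n → ℝ) (x : Pt n) (l : Fin n ⊕ Fin n) :
    DS a x (Pi.single l 1, 0) = 2 * (x.1 l - a l) := by
  simp only [DS, ContinuousLinearMap.coe_sum', Finset.sum_apply,
    ContinuousLinearMap.smul_apply, Lm_apply]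
  rw [Finset.sum_eq_single l]
  · simp
  · intro b _ hb; simp [Pi.single_apply, hb.symm]
  · simp
@[simp] lemma DS_t (a : Fin n ⊕ Fin n → ℝ) (x : Pt n) :
    DS a x ((0 : (Fin n ⊕ Fin n) → ℝ), (1:ℝ)) = 0 := by
  simp [DS, ContinuousLinearMap.coe_sum', Finset.sum_apply]

variable (k c : ℝ) (a : Fin n ⊕ Fin n → ℝ) (s : ℝ)

lemma Sg_nonneg (x : Pt n) : 0 ≤ Sg n a x := Finset.sum_nonneg fun _ _ => sq_nonneg _
lemma Sg_pos {x : Pt n} (hS : Sg n a x ≠ 0) : 0 < Sg n a x :=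
  lt_of_le_of_ne (Sg_nonneg a x) (Ne.symm hS)
lemma hfun_nonneg (x : Pt n) : 0 ≤ hfun n k c a s x :=
  add_nonneg (mul_nonneg (sq_nonneg _) (Real.rpow_nonneg (Sg_nonneg a x) _)) (sq_nonneg _)
lemma hfun_pos (hc : c ≠ 0) {x : Pt n} (hS : Sg n a x ≠ 0) : 0 < hfun n k c a s x :=
  lt_of_lt_of_le
    (mul_pos (by positivity) (Real.rpow_pos_of_pos (Sg_pos a hS) _))
    (le_add_of_nonneg_right (sq_nonneg _))

def Dh (x : Pt n) : Pt n →L[ℝ] ℝ :=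
  (c ^ 2 * (2 * k * Sg n a x ^ (2 * k - 1))) • DS a x + (2 * (x.2 - s)) • Tm n

lemma hasFDerivAt_h {x : Pt n} (hS : Sg n a x ≠ 0) :
    HasFDerivAt (hfun n k c a s) (Dh k c a s x) x := by
  have h1 : HasFDerivAt (fun y : Pt n => c ^ 2 * Sg n a y ^ (2 * k))
      ((c ^ 2) • ((2 * k * Sg n a x ^ (2 * k - 1)) • DS a x)) x :=
    ((hasFDerivAt_Sg a x).rpow_const (Or.inl hS)).const_mul (c ^ 2)
  have h2 : HasFDerivAt (fun y : Pt n => (y.2 - s) ^ 2) ((2 * (x.2 - s)) • Tm n) x :=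
    hasFDerivAt_sq (hasFDerivAt_t x s)
  have := h1.add h2
  rw [smul_smul] at this
  exact this

@[simp] lemma Dh_single (x : Pt n) (l : Fin n ⊕ Fin n) :
    Dh k c a s x (Pi.single l 1, 0)
      = c ^ 2 * (2 * k * Sg n a x ^ (2 * k - 1)) * (2 * (x.1 l - a l)) := by
  simp [Dh]
@[simp] lemma Dh_t (x : Pt n) :
    Dh k c a s x ((0 : (Fin n ⊕ Fin n) → ℝ), (1:ℝ)) = 2 * (x.2 - s) := by
  simp [Dh]

end SAux

namespace SAux
variable {n : ℕ} (k c : ℝ) (a : Fin n ⊕ Fin n → ℝ) (s : ℝ)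

def Pm (l : Fin n ⊕ Fin n) (x : Pt n) : ℝ :=
  match l with
  | Sum.inl i => c * (x.1 (Sum.inl i) - a (Sum.inl i)) * Sg n a x ^ k
      + (x.1 (Sum.inr i) - a (Sum.inr i)) * (x.2 - s)
  | Sum.inr i => c * (x.1 (Sum.inr i) - a (Sum.inr i)) * Sg n a x ^ k
      - (x.1 (Sum.inl i) - a (Sum.inl i)) * (x.2 - s)

lemma u_eq (α A B : ℝ) :
    (fun y : Pt n => (psi n k c a s y ^ α - A) / B)
      = fun y : Pt n => (1 / B) * (hfun n k c a s y ^ (1 / (4 * k) * α) - A) := by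
  ext y
  rw [psi, Real.rpow_mul (hfun_nonneg k c a s y)]
  ring

lemma hasFDerivAt_u (hc : c ≠ 0) (α A B : ℝ) {x : Pt n} (hS : Sg n a x ≠ 0) :
    HasFDerivAt (fun y : Pt n => (psi n k c a s y ^ α - A) / B)
      ((1 / B * (1 / (4 * k) * α * hfun n k c a s x ^ (1 / (4 * k) * α - 1))) • Dh k c a s x)
      x := by
  rw [u_eq]
  have h0 : hfun n k c a s x ≠ 0 := ne_of_gt (hfun_pos k c a s hc hS)
  have h1 := (((hasFDerivAt_h k c a s hS).rpow_const
      (p := 1 / (4 * k) * α) (Or.inl h0)).sub_const A).const_mul (1 / B)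
  rw [smul_smul] at h1
  exact h1

lemma Sg_split {x : Pt n} (hS : Sg n a x ≠ 0) :
    Sg n a x ^ (2 * k - 1) = Sg n a x ^ (k - 1) * Sg n a x ^ k := by
  rw [← Real.rpow_add (Sg_pos a hS)]; ring_nf

lemma X_u (hc : c ≠ 0) (α A B : ℝ) {x : Pt n} (hS : Sg n a x ≠ 0) (l : Fin n ⊕ Fin n) :
    X n k c a l (fun y : Pt n => (psi n k c a s y ^ α - A) / B) x
      = 1 / B * (1 / (4 * k) * α) * (4 * k * c)
        * (hfun n k c a s x ^ (1 / (4 * k) * α - 1)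
          * (Sg n a x ^ (k - 1) * Pm k c a s l x)) := by
  have hd := hasFDerivAt_u k c a s hc α A B hS
  have hfd := hd.fderiv
  cases l with
  | inl i =>
    rw [X, pdx, pdt, hfd]
    simp only [ContinuousLinearMap.smul_apply, Dh_single, Dh_t, smul_eq_mul, Pm]
    rw [Sg_split k a hS]
    ring
  | inr i =>
    rw [X, pdx, pdt, hfd]
    simp only [ContinuousLinearMap.smul_apply, Dh_single, Dh_t, smul_eq_mul, Pm]
    rw [Sg_split k a hS]
    ring

end SAux

namespace SAux
variable {n : ℕ} (k c : ℝ) (a : Fin n ⊕ Fin n → ℝ) (s : ℝ)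

lemma sum_pairs (x : Pt n) :
    ∑ i : Fin n, ((x.1 (Sum.inl i) - a (Sum.inl i)) ^ 2
      + (x.1 (Sum.inr i) - a (Sum.inr i)) ^ 2) = Sg n a x := by
  rw [Sg, Fintype.sum_sum_type, ← Finset.sum_add_distrib]

lemma Sg_k_sq (hk : 0 < k) (x : Pt n) :
    Sg n a x ^ k * Sg n a x ^ k = Sg n a x ^ (2 * k) := by
  rw [← Real.rpow_add' (Sg_nonneg a x) (by positivity), two_mul]

lemma sum_Pm_sq (hk : 0 < k) (x : Pt n) :
    ∑ l : Fin n ⊕ Fin n, Pm k c a s l x ^ 2 = Sg n a x * hfun n k c a s x := by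
  rw [Fintype.sum_sum_type, ← Finset.sum_add_distrib]
  have h1 : ∀ i : Fin n, Pm k c a s (Sum.inl i) x ^ 2 + Pm k c a s (Sum.inr i) x ^ 2
      = ((x.1 (Sum.inl i) - a (Sum.inl i)) ^ 2 + (x.1 (Sum.inr i) - a (Sum.inr i)) ^ 2)
        * hfun n k c a s x := by
    intro i
    rw [Pm, Pm, hfun, ← Sg_k_sq k a hk x]
    ring
  rw [Finset.sum_congr rfl fun i _ => h1 i, ← Finset.sum_mul, sum_pairs]

end SAux

namespace SAux
variable {n : ℕ} (k c : ℝ) (a : Fin n ⊕ Fin n → ℝ) (s : ℝ)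

lemma hnorm_u (hk : 0 < k) (hc : c ≠ 0) (α A B : ℝ) {x : Pt n} (hS : Sg n a x ≠ 0) :
    hnorm n k c a (fun y : Pt n => (psi n k c a s y ^ α - A) / B) x
      = |1 / B * (1 / (4 * k) * α) * (4 * k * c)|
        * (hfun n k c a s x ^ (1 / (4 * k) * α - 1) * Sg n a x ^ (k - 1))
        * Real.sqrt (Sg n a x * hfun n k c a s x) := by
  rw [hnorm]
  have h1 : ∀ l : Fin n ⊕ Fin n,
      (X n k c a l (fun y : Pt n => (psi n k c a s y ^ α - A) / B) x) ^ 2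
      = (1 / B * (1 / (4 * k) * α) * (4 * k * c)
          * (hfun n k c a s x ^ (1 / (4 * k) * α - 1) * Sg n a x ^ (k - 1))) ^ 2
        * Pm k c a s l x ^ 2 := by
    intro l
    rw [X_u k c a s hc α A B hS l]
    ring
  rw [Finset.sum_congr rfl (fun l _ => h1 l), ← Finset.mul_sum,
    sum_Pm_sq k c a s hk x, Real.sqrt_mul (sq_nonneg _), Real.sqrt_sq_eq_abs,
    abs_mul, abs_of_nonneg (mul_nonneg
      (Real.rpow_nonneg (hfun_nonneg k c a s x) _) (Real.rpow_nonneg (Sg_nonneg a x) _))]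

lemma G_eq (hk : 0 < k) (hc : c ≠ 0) (p α A B : ℝ) {x : Pt n} (hS : Sg n a x ≠ 0)
    (l : Fin n ⊕ Fin n) :
    hnorm n k c a (fun y : Pt n => (psi n k c a s y ^ α - A) / B) x ^ (p - 2)
      * X n k c a l (fun y : Pt n => (psi n k c a s y ^ α - A) / B) x
    = (|1 / B * (1 / (4 * k) * α) * (4 * k * c)| ^ (p - 2)
        * (1 / B * (1 / (4 * k) * α) * (4 * k * c)))
      * (Sg n a x ^ ((k - 1) * (p - 2) + (p - 2) / 2 + (k - 1))
        * (hfun n k c a s x ^ ((1 / (4 * k) * α - 1) * (p - 2) + (p - 2) / 2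
            + (1 / (4 * k) * α - 1))
          * Pm k c a s l x)) := by
  have hs0 := Sg_nonneg a x
  have hh0 := hfun_nonneg k c a s x
  have hsp := Sg_pos a hS
  have hhp := hfun_pos k c a s hc hS
  rw [hnorm_u k c a s hk hc α A B hS, X_u k c a s hc α A B hS l]
  rw [Real.sqrt_mul hs0, Real.sqrt_eq_rpow, Real.sqrt_eq_rpow]
  rw [Real.mul_rpow (by positivity) (by positivity),
      Real.mul_rpow (abs_nonneg _) (by positivity),
      Real.mul_rpow (Real.rpow_nonneg hh0 _) (Real.rpow_nonneg hs0 _),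
      Real.mul_rpow (Real.rpow_nonneg hs0 _) (Real.rpow_nonneg hh0 _)]
  rw [show (k - 1) * (p - 2) + (p - 2) / 2 + (k - 1)
        = (k - 1) * (p - 2) + (1 / 2 * (p - 2) + (k - 1)) by ring,
      Real.rpow_add hsp, Real.rpow_add hsp,
      show (1 / (4 * k) * α - 1) * (p - 2) + (p - 2) / 2 + (1 / (4 * k) * α - 1)
        = (1 / (4 * k) * α - 1) * (p - 2) + (1 / 2 * (p - 2) + (1 / (4 * k) * α - 1)) by ring,
      Real.rpow_add hhp, Real.rpow_add hhp]
  rw [Real.rpow_mul hs0, Real.rpow_mul hs0, Real.rpow_mul hh0, Real.rpow_mul hh0]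
  ring

end SAux

namespace SAux
variable {n : ℕ} (k c : ℝ) (a : Fin n ⊕ Fin n → ℝ) (s : ℝ)

lemma rpow_split {x : ℝ} (hx : 0 < x) (e : ℝ) : x ^ e = x ^ (e - 1) * x := by
  rw [← Real.rpow_add_one hx.ne' (e - 1), sub_add_cancel]

lemma rpow_split2 {x : ℝ} (hx : 0 < x) (e : ℝ) :
    x ^ (2 * e - 1) = x ^ (e - 1) * x ^ (e - 1) * x := by
  rw [← Real.rpow_add hx, ← Real.rpow_add_one hx.ne']
  ring_nf

lemma hasFDerivAt_P_inl (i : Fin n) {x : Pt n} (hS : Sg n a x ≠ 0) :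
    HasFDerivAt (Pm k c a s (Sum.inl i))
      ((((c * (x.1 (Sum.inl i) - a (Sum.inl i)))
            • ((k * Sg n a x ^ (k - 1)) • DS a x)
          + (Sg n a x ^ k) • (c • Lm n (Sum.inl i)))
        + ((x.1 (Sum.inr i) - a (Sum.inr i)) • Tm n
          + (x.2 - s) • Lm n (Sum.inr i)))) x := by
  have hz := (hasFDerivAt_coord (n := n) (Sum.inl i) x a).const_mul c
  have hSk : HasFDerivAt (fun y : Pt n => Sg n a y ^ k)
      ((k * Sg n a x ^ (k - 1)) • DS a x) x :=
    (hasFDerivAt_Sg a x).rpow_const (Or.inl hS)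
  have hw := hasFDerivAt_coord (n := n) (Sum.inr i) x a
  have ht := hasFDerivAt_t (n := n) x s
  exact (hz.mul hSk).add (hw.mul ht)

lemma hasFDerivAt_P_inr (i : Fin n) {x : Pt n} (hS : Sg n a x ≠ 0) :
    HasFDerivAt (Pm k c a s (Sum.inr i))
      ((((c * (x.1 (Sum.inr i) - a (Sum.inr i)))
            • ((k * Sg n a x ^ (k - 1)) • DS a x)
          + (Sg n a x ^ k) • (c • Lm n (Sum.inr i)))
        - ((x.1 (Sum.inl i) - a (Sum.inl i)) • Tm n
          + (x.2 - s) • Lm n (Sum.inl i)))) x := by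
  have hz := (hasFDerivAt_coord (n := n) (Sum.inr i) x a).const_mul c
  have hSk : HasFDerivAt (fun y : Pt n => Sg n a y ^ k)
      ((k * Sg n a x ^ (k - 1)) • DS a x) x :=
    (hasFDerivAt_Sg a x).rpow_const (Or.inl hS)
  have hw := hasFDerivAt_coord (n := n) (Sum.inl i) x a
  have ht := hasFDerivAt_t (n := n) x s
  exact (hz.mul hSk).sub (hw.mul ht)

end SAux

namespace SAux
variable {n : ℕ} (k c : ℝ) (a : Fin n ⊕ Fin n → ℝ) (s : ℝ)

lemma X_G_inl (hc : c ≠ 0) (E g K : ℝ) {x : Pt n} (hS : Sg n a x ≠ 0) (i : Fin n) :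
    X n k c a (Sum.inl i)
      (fun y => K * (Sg n a y ^ E * (hfun n k c a s y ^ g * Pm k c a s (Sum.inl i) y))) x
    = K * (2 * E * (x.1 (Sum.inl i) - a (Sum.inl i)) * Sg n a x ^ (E - 1)
          * (hfun n k c a s x ^ (g - 1) * hfun n k c a s x) * Pm k c a s (Sum.inl i) x
        + 4 * k * c * g * (Sg n a x ^ (E - 1) * Sg n a x) * Sg n a x ^ (k - 1)
          * hfun n k c a s x ^ (g - 1) * Pm k c a s (Sum.inl i) x ^ 2
        + c * (Sg n a x ^ (E - 1) * Sg n a x) * (hfun n k c a s x ^ (g - 1) * hfun n k c a s x)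
          * (Sg n a x ^ (k - 1) * Sg n a x + 2 * k * Sg n a x ^ (k - 1)
            * ((x.1 (Sum.inl i) - a (Sum.inl i)) ^ 2 + (x.1 (Sum.inr i) - a (Sum.inr i)) ^ 2))) := by
  have hsp := Sg_pos a hS
  have hhp := hfun_pos k c a s hc hS
  have hA : HasFDerivAt (fun y : Pt n => Sg n a y ^ E)
      ((E * Sg n a x ^ (E - 1)) • DS a x) x :=
    (hasFDerivAt_Sg a x).rpow_const (Or.inl hS)
  have hB : HasFDerivAt (fun y : Pt n => hfun n k c a s y ^ g)
      ((g * hfun n k c a s x ^ (g - 1)) • Dh k c a s x) x :=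
    (hasFDerivAt_h k c a s hS).rpow_const (Or.inl hhp.ne')
  have hG : HasFDerivAt (fun y => K * (Sg n a y ^ E * (hfun n k c a s y ^ g * Pm k c a s (Sum.inl i) y))) _ x :=
    ((hA.fun_mul (hB.fun_mul (hasFDerivAt_P_inl k c a s i hS))).const_mul K)
  rw [X, pdx, pdt, hG.fderiv]
  simp only [ContinuousLinearMap.smul_apply, ContinuousLinearMap.add_apply,
    ContinuousLinearMap.sub_apply, DS_single, DS_t, Dh_single, Dh_t, Lm_apply, Tm_apply,
    smul_eq_mul, Pi.single_apply, Prod.fst, Prod.snd, Pi.zero_apply]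
  simp only [reduceIte, reduceCtorEq, if_true, if_false]
  simp only [Pm]
  rw [rpow_split hsp E, rpow_split hsp k, rpow_split2 hsp k, rpow_split hhp g]
  ring

end SAux

namespace SAux
variable {n : ℕ} (k c : ℝ) (a : Fin n ⊕ Fin n → ℝ) (s : ℝ)

lemma X_G_inr (hc : c ≠ 0) (E g K : ℝ) {x : Pt n} (hS : Sg n a x ≠ 0) (i : Fin n) :
    X n k c a (Sum.inr i)
      (fun y => K * (Sg n a y ^ E * (hfun n k c a s y ^ g * Pm k c a s (Sum.inr i) y))) x
    = K * (2 * E * (x.1 (Sum.inr i) - a (Sum.inr i)) * Sg n a x ^ (E - 1)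
          * (hfun n k c a s x ^ (g - 1) * hfun n k c a s x) * Pm k c a s (Sum.inr i) x
        + 4 * k * c * g * (Sg n a x ^ (E - 1) * Sg n a x) * Sg n a x ^ (k - 1)
          * hfun n k c a s x ^ (g - 1) * Pm k c a s (Sum.inr i) x ^ 2
        + c * (Sg n a x ^ (E - 1) * Sg n a x) * (hfun n k c a s x ^ (g - 1) * hfun n k c a s x)
          * (Sg n a x ^ (k - 1) * Sg n a x + 2 * k * Sg n a x ^ (k - 1)
            * ((x.1 (Sum.inl i) - a (Sum.inl i)) ^ 2 + (x.1 (Sum.inr i) - a (Sum.inr i)) ^ 2))) := by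
  have hsp := Sg_pos a hS
  have hhp := hfun_pos k c a s hc hS
  have hA : HasFDerivAt (fun y : Pt n => Sg n a y ^ E)
      ((E * Sg n a x ^ (E - 1)) • DS a x) x :=
    (hasFDerivAt_Sg a x).rpow_const (Or.inl hS)
  have hB : HasFDerivAt (fun y : Pt n => hfun n k c a s y ^ g)
      ((g * hfun n k c a s x ^ (g - 1)) • Dh k c a s x) x :=
    (hasFDerivAt_h k c a s hS).rpow_const (Or.inl hhp.ne')
  have hG : HasFDerivAt (fun y => K * (Sg n a y ^ E * (hfun n k c a s y ^ g * Pm k c a s (Sum.inr i) y))) _ x :=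
    ((hA.fun_mul (hB.fun_mul (hasFDerivAt_P_inr k c a s i hS))).const_mul K)
  rw [X, pdx, pdt, hG.fderiv]
  simp only [ContinuousLinearMap.smul_apply, ContinuousLinearMap.add_apply,
    ContinuousLinearMap.sub_apply, DS_single, DS_t, Dh_single, Dh_t, Lm_apply, Tm_apply,
    smul_eq_mul, Pi.single_apply, Prod.fst, Prod.snd, Pi.zero_apply]
  simp only [reduceIte, reduceCtorEq, if_true, if_false]
  simp only [Pm]
  rw [rpow_split hsp E, rpow_split hsp k, rpow_split2 hsp k, rpow_split hhp g]
  ring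

lemma X_congr (l : Fin n ⊕ Fin n) {f g : Pt n → ℝ} {x : Pt n} (h : f =ᶠ[nhds x] g) :
    X n k c a l f x = X n k c a l g x := by
  cases l <;> · rw [X, X, pdx, pdx, pdt, pdt, h.fderiv_eq]

lemma continuous_Sg : Continuous (Sg n a) := by
  unfold Sg
  exact continuous_finset_sum _ fun l _ => by fun_prop

lemma isOpen_Sg_ne : IsOpen {y : Pt n | Sg n a y ≠ 0} :=
  isOpen_compl_singleton.preimage (continuous_Sg a)

end SAux


theorem stmt14 (n : ℕ) (hn : 1 ≤ n) (a : Fin n ⊕ Fin n → ℝ) (s : ℝ)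
    (c k : ℝ) (hc : c ≠ 0) (hk : 0 < k)
    (p Q α : ℝ) (hp : 1 < p) (hQ : Q = 2 * n + 2 * k) (hpQ : p ≠ Q)
    (hα : α = (Q - p) / (1 - p)) (r R : ℝ) (hr : 0 < r) (hrR : r < R) :
    (∀ x : Pt n, r < psi n k c a s x → psi n k c a s x < R → Sg n a x ≠ 0 →
      pLap n k c a p
        (fun y => (psi n k c a s y ^ α - R ^ α) / (r ^ α - R ^ α)) x = 0)
    ∧ (∀ x : Pt n, psi n k c a s x = r →
        (psi n k c a s x ^ α - R ^ α) / (r ^ α - R ^ α) = 1)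
    ∧ (∀ x : Pt n, psi n k c a s x = R →
        (psi n k c a s x ^ α - R ^ α) / (r ^ α - R ^ α) = 0) := by
  have hk0 : k ≠ 0 := hk.ne'
  have h1p : (1 : ℝ) - p ≠ 0 := sub_ne_zero.2 (by linarith)
  have hα0 : α ≠ 0 := by
    rw [hα]
    exact div_ne_zero (sub_ne_zero.2 (Ne.symm hpQ)) h1p
  have hC : r ^ α - R ^ α ≠ 0 := by
    rcases lt_or_gt_of_ne hα0 with hneg | hpos
    · exact sub_ne_zero.2 (ne_of_gt (Real.rpow_lt_rpow_of_neg hr hrR hneg))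
    · exact sub_ne_zero.2 (ne_of_lt (Real.rpow_lt_rpow hr.le hrR hpos))
  refine ⟨?_, fun x hx => by rw [hx]; exact div_self hC,
    fun x hx => by rw [hx, sub_self, zero_div]⟩
  intro x _ _ hS
  have hsp := SAux.Sg_pos a hS
  have hhp := SAux.hfun_pos k c a s hc hS
  set KK := |1 / (r ^ α - R ^ α) * (1 / (4 * k) * α) * (4 * k * c)| ^ (p - 2)
      * (1 / (r ^ α - R ^ α) * (1 / (4 * k) * α) * (4 * k * c)) with hKK
  set EE := (k - 1) * (p - 2) + (p - 2) / 2 + (k - 1) with hEE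
  set gg := (1 / (4 * k) * α - 1) * (p - 2) + (p - 2) / 2 + (1 / (4 * k) * α - 1) with hgg
  have step1 : pLap n k c a p (fun y => (psi n k c a s y ^ α - R ^ α) / (r ^ α - R ^ α)) x
      = ∑ l : Fin n ⊕ Fin n, X n k c a l
          (fun y => KK * (Sg n a y ^ EE * (hfun n k c a s y ^ gg * SAux.Pm k c a s l y))) x := by
    rw [pLap]
    refine Finset.sum_congr rfl fun l _ => SAux.X_congr k c a l ?_
    filter_upwards [(SAux.isOpen_Sg_ne a).mem_nhds hS] with y hy
    exact SAux.G_eq k c a s hk hc p α (R ^ α) (r ^ α - R ^ α) hy l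
  rw [step1]
  simp only [Fintype.sum_sum_type]
  rw [Finset.sum_congr rfl fun i _ => SAux.X_G_inl k c a s hc EE gg KK hS i,
      Finset.sum_congr rfl fun i _ => SAux.X_G_inr k c a s hc EE gg KK hS i,
      ← Finset.sum_add_distrib]
  have hH : hfun n k c a s x
      = c ^ 2 * ((Sg n a x ^ (k - 1) * Sg n a x) * (Sg n a x ^ (k - 1) * Sg n a x))
        + (x.2 - s) ^ 2 := by
    rw [hfun, ← SAux.Sg_k_sq k a hk x, SAux.rpow_split hsp k]
  have hper : ∀ i : Fin n,
      (KK * (2 * EE * (x.1 (Sum.inl i) - a (Sum.inl i)) * Sg n a x ^ (EE - 1)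
          * (hfun n k c a s x ^ (gg - 1) * hfun n k c a s x) * SAux.Pm k c a s (Sum.inl i) x
        + 4 * k * c * gg * (Sg n a x ^ (EE - 1) * Sg n a x) * Sg n a x ^ (k - 1)
          * hfun n k c a s x ^ (gg - 1) * SAux.Pm k c a s (Sum.inl i) x ^ 2
        + c * (Sg n a x ^ (EE - 1) * Sg n a x) * (hfun n k c a s x ^ (gg - 1) * hfun n k c a s x)
          * (Sg n a x ^ (k - 1) * Sg n a x + 2 * k * Sg n a x ^ (k - 1)
            * ((x.1 (Sum.inl i) - a (Sum.inl i)) ^ 2 + (x.1 (Sum.inr i) - a (Sum.inr i)) ^ 2)))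
      + KK * (2 * EE * (x.1 (Sum.inr i) - a (Sum.inr i)) * Sg n a x ^ (EE - 1)
          * (hfun n k c a s x ^ (gg - 1) * hfun n k c a s x) * SAux.Pm k c a s (Sum.inr i) x
        + 4 * k * c * gg * (Sg n a x ^ (EE - 1) * Sg n a x) * Sg n a x ^ (k - 1)
          * hfun n k c a s x ^ (gg - 1) * SAux.Pm k c a s (Sum.inr i) x ^ 2
        + c * (Sg n a x ^ (EE - 1) * Sg n a x) * (hfun n k c a s x ^ (gg - 1) * hfun n k c a s x)
          * (Sg n a x ^ (k - 1) * Sg n a x + 2 * k * Sg n a x ^ (k - 1)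
            * ((x.1 (Sum.inl i) - a (Sum.inl i)) ^ 2 + (x.1 (Sum.inr i) - a (Sum.inr i)) ^ 2))))
      = (KK * c * Sg n a x ^ (EE - 1) * Sg n a x ^ (k - 1) * Sg n a x
          * hfun n k c a s x ^ (gg - 1) * hfun n k c a s x * (2 * EE + 4 * k * gg + 4 * k))
          * ((x.1 (Sum.inl i) - a (Sum.inl i)) ^ 2 + (x.1 (Sum.inr i) - a (Sum.inr i)) ^ 2)
        + 2 * KK * c * Sg n a x ^ (EE - 1) * Sg n a x ^ (k - 1) * Sg n a x * Sg n a x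
          * hfun n k c a s x ^ (gg - 1) * hfun n k c a s x := by
    intro i
    simp only [SAux.Pm]
    rw [hH, SAux.rpow_split hsp k]
    ring
  rw [Finset.sum_congr rfl fun i _ => hper i, Finset.sum_add_distrib, ← Finset.mul_sum,
    SAux.sum_pairs, Finset.sum_const, Finset.card_univ, Fintype.card_fin, nsmul_eq_mul]
  have hid : 2 * EE + 4 * k * gg + 4 * k + 2 * (n : ℝ) = 0 := by
    rw [hEE, hgg, hα, hQ]
    field_simp
    ring
  linear_combination (KK * c * Sg n a x ^ (EE - 1) * Sg n a x ^ (k - 1) * Sg n a x * Sg n a x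
    * hfun n k c a s x ^ (gg - 1) * hfun n k c a s x) * hid
end
end
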